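/- There exists a continuous map t : 𝒦(ℤ^ω) → ℤ^ω such that the map T(K, x) = x + t(K) is a homeomorphism from H = {(K,x) : x ∈ K} onto a closed subset F of ℤ^ω, the sets K + t(K) for K ∈ 𝒦(ℤ^ω) are pairwise disjoint with union F, and moreover (K + t(K) + {-1,0,1}^ω) ∩ F = K + t(K) for every K ∈ 𝒦(ℤ^ω). -/

import Mathlib

open TopologicalSpace Set Topology Pointwise
open Metric

noncomputable local instance : MetricSpace (ℕ → ℤ) := PiCountable.metricSpace

set_option maxHeartbeats 2000000

namespace TCA

lemma coord_le_dist {x y : ℕ → ℤ} {i : ℕ} (h : x i ≠ y i) : ((1:ℝ)/2)^i ≤ dist x y := by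
  have h1 := PiCountable.min_dist_le_dist_pi x y i
  have h2 : (1:ℝ) ≤ dist (x i) (y i) := by
    rw [Int.dist_eq]
    have : (1:ℤ) ≤ |x i - y i| := Int.one_le_abs (sub_ne_zero.2 h)
    exact_mod_cast this
  have h3 : ((1:ℝ)/2)^i ≤ 1 := pow_le_one₀ (by norm_num) (by norm_num)
  calc ((1:ℝ)/2)^i ≤ min (((1:ℝ)/2)^(Encodable.encode i)) (dist (x i) (y i)) :=
        le_min le_rfl (le_trans h3 h2)
    _ ≤ dist x y := by rw [one_div]; exact h1

lemma agree_of_dist_lt {x y : ℕ → ℤ} {n : ℕ} (h : dist x y < ((1:ℝ)/2)^n) :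
    ∀ i ≤ n, x i = y i := by
  intro i hi
  by_contra hne
  have h1 : ((1:ℝ)/2)^n ≤ ((1:ℝ)/2)^i :=
    pow_le_pow_of_le_one (by norm_num) (by norm_num) hi
  exact absurd (le_trans h1 (coord_le_dist hne)) (not_le.2 h)

lemma dist_le_of_agree {x y : ℕ → ℤ} {n : ℕ} (h : ∀ i ≤ n, x i = y i) :
    dist x y ≤ ((1:ℝ)/2)^n := by
  have hsum := PiCountable.dist_summable x y
  have hg : Summable (fun i : ℕ => ((1:ℝ)/2)^i) := summable_geometric_two
  have hgs : Summable (fun i : ℕ => if i < n+1 then 0 else ((1:ℝ)/2)^i) := by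
    apply Summable.of_nonneg_of_le (fun i => by positivity) (fun i => ?_) hg
    split <;> [positivity; exact le_rfl]
  have hle : dist x y ≤ ∑' i : ℕ, if i < n+1 then 0 else ((1:ℝ)/2)^i := by
    rw [PiCountable.dist_eq_tsum]
    refine Summable.tsum_le_tsum (fun i => ?_) hsum hgs
    by_cases hi : i < n+1
    · simp only [hi, if_true]
      have : x i = y i := h i (Nat.lt_succ_iff.1 hi)
      simp [this]
    · simp only [hi, if_false]
      exact le_trans (min_le_left _ _) (by simp)
  refine le_trans hle ?_
  rw [← Summable.sum_add_tsum_nat_add (f := fun i : ℕ => if i < n+1 then 0 else ((1:ℝ)/2)^i) (n+1) hgs]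
  have e1 : (∑ i ∈ Finset.range (n+1), if i < n+1 then (0:ℝ) else ((1:ℝ)/2)^i) = 0 := by
    apply Finset.sum_eq_zero; intro i hi; simp [Finset.mem_range.1 hi]
  have e2 : (fun i : ℕ => if i + (n+1) < n+1 then (0:ℝ) else ((1:ℝ)/2)^(i+(n+1)))
      = fun i : ℕ => ((1:ℝ)/2)^(n+1) * ((1:ℝ)/2)^i := by
    funext i
    rw [if_neg (by omega), pow_add]
    ring
  rw [e1, e2, zero_add, tsum_mul_left, tsum_geometric_two]
  rw [pow_succ]
  ring_nf
  norm_num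



def trunc (n : ℕ) (x : ℕ → ℤ) : ℕ → ℤ := fun i => if i ≤ n then x i else 0

lemma trunc_eq_iff {n : ℕ} {x y : ℕ → ℤ} : trunc n x = trunc n y ↔ ∀ i ≤ n, x i = y i := by
  constructor
  · intro h i hi
    have := congrFun h i
    simpa [trunc, hi] using this
  · intro h
    funext i
    simp only [trunc]
    split
    · exact h i ‹_›
    · rfl

lemma trunc_apply_self (n : ℕ) (x : ℕ → ℤ) : trunc n x n = x n := by simp [trunc]

def Dset : Set (ℕ → ℤ) := ⋃ n, Set.range (trunc n)

lemma trunc_mem_Dset (n : ℕ) (x : ℕ → ℤ) : trunc n x ∈ Dset :=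
  Set.mem_iUnion.2 ⟨n, ⟨x, rfl⟩⟩

lemma countable_Dset : Dset.Countable := by
  refine Set.countable_iUnion (fun n => ?_)
  have : Set.range (trunc n) ⊆ Set.range
      (fun v : Fin (n+1) → ℤ => trunc n (fun i => if h : i < n+1 then v ⟨i, h⟩ else 0)) := by
    rintro _ ⟨x, rfl⟩
    refine ⟨fun j => x j, ?_⟩
    funext i
    simp only [trunc]
    split
    · rw [dif_pos (by omega)]
    · rfl
  exact (Set.countable_range _).mono this

def SP : Type := {A : Set (ℕ → ℤ) // A.Finite ∧ A ⊆ Dset}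

instance : Countable SP :=
  (Set.countable_setOf_finite_subset countable_Dset).to_subtype

noncomputable instance : Encodable SP := Encodable.ofCountable SP

noncomputable def bnd (n : ℕ) (A : SP) : ℕ := A.2.1.toFinset.sup fun y => (y n).natAbs

lemma le_bnd {n : ℕ} {A : SP} {y : ℕ → ℤ} (hy : y ∈ A.1) : (y n).natAbs ≤ bnd n A :=
  Finset.le_sup (f := fun y => (y n).natAbs) (A.2.1.mem_toFinset.2 hy)

noncomputable def beta (n k : ℕ) : ℕ := ((Encodable.decode (α := SP) k).elim 0 (bnd n))

lemma beta_encode (n : ℕ) (A : SP) : beta n (Encodable.encode A) = bnd n A := by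
  simp [beta, Encodable.encodek]

noncomputable def sβ (n m : ℕ) : ℕ := ∑ j ∈ Finset.range m, (beta n j + beta n (j+1) + 3)

lemma gap_nat {n j k : ℕ} (h : j < k) : beta n j + beta n k + 3 + sβ n j ≤ sβ n k := by
  have hsplit : sβ n k = sβ n j + ∑ i ∈ Finset.Ico j k, (beta n i + beta n (i+1) + 3) := by
    simp only [sβ, Finset.range_eq_Ico]
    exact (Finset.sum_Ico_consecutive _ (Nat.zero_le j) (le_of_lt h)).symm
  rw [hsplit]
  have hbot : ∑ i ∈ Finset.Ico j k, (beta n i + beta n (i+1) + 3)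
      = beta n j + beta n (j+1) + 3 + ∑ i ∈ Finset.Ico (j+1) k, (beta n i + beta n (i+1) + 3) :=
    Finset.sum_eq_sum_Ico_succ_bot h _
  rcases eq_or_lt_of_le (Nat.succ_le_of_lt h) with heq | hlt
  · rw [hbot, ← heq]
    simp [Finset.Ico_self]
    omega
  · have hmem : k - 1 ∈ Finset.Ico (j+1) k := by
      simp only [Finset.mem_Ico]; omega
    have hsingle : beta n (k-1) + beta n (k-1+1) + 3
        ≤ ∑ i ∈ Finset.Ico (j+1) k, (beta n i + beta n (i+1) + 3) :=
      Finset.single_le_sum (f := fun i => beta n i + beta n (i+1) + 3) (fun i _ => Nat.zero_le _) hmem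
    have hk1 : k - 1 + 1 = k := by omega
    rw [hk1] at hsingle
    omega



abbrev 𝒦 := NonemptyCompacts (ℕ → ℤ)

lemma finite_trunc_image (K : 𝒦) (n : ℕ) : (trunc n '' (K : Set (ℕ → ℤ))).Finite := by
  have hKc : IsCompact (K : Set (ℕ → ℤ)) := K.isCompact
  have hC : ∀ i : ℕ, ((fun x : ℕ → ℤ => x i) '' (K : Set (ℕ → ℤ))).Finite := by
    intro i
    have : IsCompact ((fun x : ℕ → ℤ => x i) '' (K : Set (ℕ → ℤ))) :=
      hKc.image (continuous_apply i)
    exact this.finite_of_discrete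
  have hres : ((fun x : ℕ → ℤ => fun j : Fin (n+1) => x j) '' (K : Set (ℕ → ℤ))).Finite := by
    refine Set.Finite.subset (Set.Finite.pi (fun j : Fin (n+1) => hC j)) ?_
    rintro _ ⟨x, hx, rfl⟩
    intro j _
    exact ⟨x, hx, rfl⟩
  have himg : trunc n '' (K : Set (ℕ → ℤ))
      = (fun v : Fin (n+1) → ℤ => fun i : ℕ => if h : i ≤ n then v ⟨i, Nat.lt_succ_of_le h⟩ else 0)
        '' ((fun x : ℕ → ℤ => fun j : Fin (n+1) => x j) '' (K : Set (ℕ → ℤ))) := by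
    rw [Set.image_image]
    apply Set.image_congr
    intro x _
    funext i
    simp only [trunc]
    split
    · rfl
    · rfl
  rw [himg]
  exact hres.image _

noncomputable def profile (K : 𝒦) (n : ℕ) : SP :=
  ⟨trunc n '' (K : Set (ℕ → ℤ)), finite_trunc_image K n,
    by rintro _ ⟨x, _, rfl⟩; exact trunc_mem_Dset n x⟩

noncomputable def tmap (K : 𝒦) : ℕ → ℤ := fun n => (sβ n (Encodable.encode (profile K n)) : ℤ)

lemma natAbs_le_bnd {K : 𝒦} {x : ℕ → ℤ} (hx : x ∈ K) (n : ℕ) :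
    (x n).natAbs ≤ bnd n (profile K n) := by
  have h1 : trunc n x ∈ (profile K n).1 := ⟨x, hx, rfl⟩
  have := le_bnd (n := n) h1
  rwa [trunc_apply_self] at this

/-- Key separation lemma. -/
lemma sep {K K' : 𝒦} {n : ℕ} (h : profile K n ≠ profile K' n)
    {x x' : ℕ → ℤ} (hx : x ∈ K) (hx' : x' ∈ K') {ε : ℤ} (hε : ε.natAbs ≤ 1) :
    x n + tmap K n + ε ≠ x' n + tmap K' n := by
  intro heq
  set A := profile K n with hA
  set A' := profile K' n with hA'
  have henc : Encodable.encode A ≠ Encodable.encode A' := fun hc => h (Encodable.encode_injective hc)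
  have hb : (x n).natAbs ≤ bnd n A := natAbs_le_bnd hx n
  have hb' : (x' n).natAbs ≤ bnd n A' := natAbs_le_bnd hx' n
  have hbA : beta n (Encodable.encode A) = bnd n A := beta_encode n A
  have hbA' : beta n (Encodable.encode A') = bnd n A' := beta_encode n A'
  have htK : tmap K n = (sβ n (Encodable.encode A) : ℤ) := rfl
  have htK' : tmap K' n = (sβ n (Encodable.encode A') : ℤ) := rfl
  rw [htK, htK'] at heq
  rcases lt_or_gt_of_ne henc with hlt | hlt
  · have := gap_nat (n := n) hlt
    rw [hbA, hbA'] at this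
    omega
  · have := gap_nat (n := n) hlt
    rw [hbA, hbA'] at this
    omega

lemma agree_step {K K' : 𝒦} {x x' : ℕ → ℤ} (hx : x ∈ K) (hx' : x' ∈ K') {n : ℕ}
    (h : x n + tmap K n = x' n + tmap K' n) :
    profile K n = profile K' n ∧ x n = x' n ∧ tmap K n = tmap K' n := by
  have hp : profile K n = profile K' n := by
    by_contra hne
    exact sep hne hx hx' (by norm_num : (0:ℤ).natAbs ≤ 1) (by omega)
  have ht : tmap K n = tmap K' n := by rw [tmap, tmap, hp]
  exact ⟨hp, by omega, ht⟩

lemma eq_of_profiles_eq {K K' : 𝒦} (h : ∀ n, profile K n = profile K' n) : K = K' := by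
  have key : ∀ (L L' : 𝒦), (∀ n, profile L n = profile L' n) →
      (L : Set (ℕ → ℤ)) ⊆ (L' : Set (ℕ → ℤ)) := by
    intro L L' hLL' x hx
    have hcl : closure (L' : Set (ℕ → ℤ)) = (L' : Set (ℕ → ℤ)) := L'.isCompact.isClosed.closure_eq
    rw [← hcl]
    rw [Metric.mem_closure_iff]
    intro ε hε
    obtain ⟨n, hn⟩ := exists_pow_lt_of_lt_one hε (by norm_num : (1:ℝ)/2 < 1)
    have h1 : trunc n x ∈ (profile L' n).1 := by rw [← hLL']; exact ⟨x, hx, rfl⟩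
    obtain ⟨y, hy, hxy⟩ := h1
    refine ⟨y, hy, ?_⟩
    have : dist x y ≤ ((1:ℝ)/2)^n := by
      apply dist_le_of_agree
      intro i hi
      exact (trunc_eq_iff.1 hxy i hi).symm
    exact lt_of_le_of_lt this hn
  apply NonemptyCompacts.ext
  exact le_antisymm (key K K' h) (key K' K (fun n => (h n).symm))

lemma edist_ne_top (K K' : 𝒦) :
    EMetric.hausdorffEdist (K : Set (ℕ → ℤ)) (K' : Set (ℕ → ℤ)) ≠ ⊤ :=
  Metric.hausdorffEdist_ne_top_of_nonempty_of_bounded K.nonempty K'.nonempty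
    K.isCompact.isBounded K'.isCompact.isBounded

lemma profile_eq_of_dist_lt {K K' : 𝒦} {n : ℕ} (h : dist K K' < ((1:ℝ)/2)^n) :
    profile K n = profile K' n := by
  have key : ∀ L L' : 𝒦, dist L L' < ((1:ℝ)/2)^n → (profile L n).1 ⊆ (profile L' n).1 := by
    rintro L L' hd _ ⟨x, hx, rfl⟩
    rw [NonemptyCompacts.dist_eq] at hd
    obtain ⟨y, hy, hxy⟩ := Metric.exists_dist_lt_of_hausdorffDist_lt hx hd (edist_ne_top L L')
    have : trunc n x = trunc n y := trunc_eq_iff.2 (agree_of_dist_lt hxy)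
    rw [this]
    exact ⟨y, hy, rfl⟩
  apply Subtype.ext
  exact Set.Subset.antisymm (key K K' h) (key K' K (by rwa [dist_comm]))

lemma dist_le_of_profile_eq {K K' : 𝒦} {n : ℕ} (h : profile K n = profile K' n) :
    dist K K' ≤ ((1:ℝ)/2)^n := by
  rw [NonemptyCompacts.dist_eq]
  have key : ∀ L L' : 𝒦, (profile L n).1 ⊆ (profile L' n).1 →
      ∀ x ∈ (L : Set (ℕ → ℤ)), ∃ y ∈ (L' : Set (ℕ → ℤ)), dist x y ≤ ((1:ℝ)/2)^n := by
    intro L L' hsub x hx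
    obtain ⟨y, hy, hxy⟩ := hsub ⟨x, hx, rfl⟩
    refine ⟨y, hy, dist_le_of_agree (fun i hi => ?_)⟩
    exact (trunc_eq_iff.1 hxy i hi).symm
  exact Metric.hausdorffDist_le_of_mem_dist (by positivity)
    (key K K' (le_of_eq (congrArg _ h))) (key K' K (le_of_eq (congrArg _ h.symm)))

lemma continuous_tmap : Continuous tmap := by
  refine continuous_pi fun n => continuous_iff_continuousAt.2 fun K => ?_
  have hev : (fun K' : 𝒦 => tmap K' n) =ᶠ[nhds K] fun _ => tmap K n := by
    filter_upwards [Metric.ball_mem_nhds K (pow_pos (by norm_num : (0:ℝ) < 1/2) n)] with K' hK'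
    have hp : profile K' n = profile K n :=
      profile_eq_of_dist_lt (by rwa [Metric.mem_ball] at hK')
    simp only [tmap, hp]
  exact ContinuousAt.congr continuousAt_const hev.symm

set_option maxHeartbeats 2000000 in
lemma cont_infDist : Continuous fun q : 𝒦 × (ℕ → ℤ) => Metric.infDist q.2 (q.1 : Set (ℕ → ℤ)) :=
  (Metric.lipschitz_infDist).continuous.comp (continuous_snd.prodMk continuous_fst)

lemma isClosed_H : IsClosed {q : 𝒦 × (ℕ → ℤ) | q.2 ∈ q.1} := by
  have hc := cont_infDist
  have heq : {q : 𝒦 × (ℕ → ℤ) | q.2 ∈ q.1}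
      = (fun q : 𝒦 × (ℕ → ℤ) => Metric.infDist q.2 (q.1 : Set (ℕ → ℤ))) ⁻¹' {0} := by
    ext q
    simp only [Set.mem_setOf_eq, Set.mem_preimage, Set.mem_singleton_iff]
    exact q.1.isCompact.isClosed.mem_iff_infDist_zero q.1.nonempty
  rw [heq]
  exact isClosed_singleton.preimage hc

abbrev Hsub := {q : 𝒦 × (ℕ → ℤ) // q.2 ∈ q.1}

noncomputable def T (p : Hsub) : ℕ → ℤ := p.val.2 + tmap p.val.1

lemma T_cont : Continuous T :=
  (continuous_snd.comp continuous_subtype_val).add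
    (continuous_tmap.comp (continuous_fst.comp continuous_subtype_val))

lemma T_inj : Function.Injective T := by
  rintro ⟨⟨K, x⟩, hx⟩ ⟨⟨K', x'⟩, hx'⟩ h
  simp only [T] at h
  have hco : ∀ n, x n + tmap K n = x' n + tmap K' n := fun n => congrFun h n
  have hst := fun n => agree_step hx hx' (hco n)
  have hK : K = K' := eq_of_profiles_eq (fun n => (hst n).1)
  have hxx : x = x' := funext fun n => (hst n).2.1
  subst hK; subst hxx; rfl

lemma est {p p' : Hsub} {n : ℕ} (h : ∀ i ≤ n, T p i = T p' i) :
    dist p.val.1 p'.val.1 ≤ ((1:ℝ)/2)^n ∧ dist p.val.2 p'.val.2 ≤ ((1:ℝ)/2)^n := by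
  obtain ⟨⟨K, x⟩, hx⟩ := p
  obtain ⟨⟨K', x'⟩, hx'⟩ := p'
  have hst : ∀ i ≤ n, profile K i = profile K' i ∧ x i = x' i ∧ tmap K i = tmap K' i :=
    fun i hi => agree_step hx hx' (h i hi)
  exact ⟨dist_le_of_profile_eq ((hst n le_rfl).1),
    dist_le_of_agree (fun i hi => (hst i hi).2.1)⟩

lemma T_closedMap : IsClosedMap T := by
  intro D hD
  apply IsSeqClosed.isClosed
  intro z z0 hz hz0
  simp only [Set.mem_image] at hz
  choose p hpD hpz using hz
  have hcz : CauchySeq z := hz0.cauchySeq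
  have hkey : ∀ n : ℕ, ∃ N, ∀ a b, N ≤ a → N ≤ b →
      dist ((p a).val.1) ((p b).val.1) ≤ ((1:ℝ)/2)^n ∧
      dist ((p a).val.2) ((p b).val.2) ≤ ((1:ℝ)/2)^n := by
    intro n
    obtain ⟨N, hN⟩ := Metric.cauchySeq_iff.1 hcz (((1:ℝ)/2)^n) (by positivity)
    refine ⟨N, fun a b ha hb => est (fun i hi => ?_)⟩
    have hd : dist (z a) (z b) < ((1:ℝ)/2)^n := hN a ha b hb
    have := agree_of_dist_lt hd i hi
    rwa [← hpz a, ← hpz b] at this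
  have hcauchy : ∀ (f : ℕ → ℕ → ℝ),
      (∀ n, ∃ N, ∀ a b, N ≤ a → N ≤ b → f a b ≤ ((1:ℝ)/2)^n) →
      ∀ ε > (0:ℝ), ∃ N, ∀ a, N ≤ a → ∀ b, N ≤ b → f a b < ε := by
    intro f hf ε hε
    obtain ⟨n, hn⟩ := exists_pow_lt_of_lt_one hε (by norm_num : (1:ℝ)/2 < 1)
    obtain ⟨N, hN⟩ := hf n
    exact ⟨N, fun a ha b hb => lt_of_le_of_lt (hN a b ha hb) hn⟩
  have hcK : CauchySeq (fun i => (p i).val.1) := by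
    rw [Metric.cauchySeq_iff]
    exact hcauchy _ (fun n => (hkey n).imp (fun N hN a b ha hb => (hN a b ha hb).1))
  have hcx : CauchySeq (fun i => (p i).val.2) := by
    rw [Metric.cauchySeq_iff]
    exact hcauchy _ (fun n => (hkey n).imp (fun N hN a b ha hb => (hN a b ha hb).2))
  obtain ⟨Kl, hKl⟩ := cauchySeq_tendsto_of_complete hcK
  obtain ⟨xl, hxl⟩ := cauchySeq_tendsto_of_complete hcx
  have hKd : ∀ ε > (0:ℝ), ∃ N, ∀ i, N ≤ i → dist ((p i).val.1) Kl < ε := by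
    intro ε hε
    obtain ⟨N, hN⟩ := (Metric.tendsto_atTop.1 hKl) ε hε
    exact ⟨N, hN⟩
  have hxd : ∀ ε > (0:ℝ), ∃ N, ∀ i, N ≤ i → dist ((p i).val.2) xl < ε := by
    intro ε hε
    obtain ⟨N, hN⟩ := (Metric.tendsto_atTop.1 hxl) ε hε
    exact ⟨N, hN⟩
  have hmem : xl ∈ Kl := by
    show xl ∈ (Kl : Set (ℕ → ℤ))
    rw [Kl.isCompact.isClosed.mem_iff_infDist_zero Kl.nonempty]
    have hle : ∀ ε > (0:ℝ), Metric.infDist xl (Kl : Set (ℕ → ℤ)) < ε := by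
      intro ε hε
      obtain ⟨N1, h1⟩ := hKd (ε/2) (by linarith)
      obtain ⟨N2, h2⟩ := hxd (ε/2) (by linarith)
      set i := max N1 N2
      have hb1 : dist ((p i).val.1) Kl < ε/2 := h1 i (le_max_left _ _)
      have hb2 : dist ((p i).val.2) xl < ε/2 := h2 i (le_max_right _ _)
      have e1 : Metric.infDist xl (Kl : Set (ℕ → ℤ))
          ≤ Metric.infDist ((p i).val.2) (Kl : Set (ℕ → ℤ)) + dist xl ((p i).val.2) :=
        Metric.infDist_le_infDist_add_dist
      have e2 : Metric.infDist ((p i).val.2) (Kl : Set (ℕ → ℤ))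
          ≤ Metric.hausdorffDist ((p i).val.1 : Set (ℕ → ℤ)) (Kl : Set (ℕ → ℤ)) :=
        Metric.infDist_le_hausdorffDist_of_mem (p i).property (edist_ne_top _ _)
      rw [← NonemptyCompacts.dist_eq] at e2
      rw [dist_comm] at hb2
      calc Metric.infDist xl (Kl : Set (ℕ → ℤ))
          ≤ Metric.infDist ((p i).val.2) (Kl : Set (ℕ → ℤ)) + dist xl ((p i).val.2) := e1
        _ ≤ dist ((p i).val.1) Kl + dist xl ((p i).val.2) := by linarith
        _ < ε := by linarith
    by_contra hne
    have hpos : 0 < Metric.infDist xl (Kl : Set (ℕ → ℤ)) :=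
      lt_of_le_of_ne Metric.infDist_nonneg (Ne.symm hne)
    exact absurd (hle _ hpos) (lt_irrefl _)
  refine ⟨⟨(Kl, xl), hmem⟩, ?_, ?_⟩
  · -- p i tends to the limit point in the subtype
    have hval : Filter.Tendsto (fun i => (p i).val) Filter.atTop (nhds (Kl, xl)) :=
      hKl.prodMk_nhds hxl
    have hp : Filter.Tendsto p Filter.atTop (nhds (⟨(Kl, xl), hmem⟩ : Hsub)) := by
      rw [tendsto_subtype_rng]
      exact hval
    exact hD.mem_of_tendsto hp (Filter.Eventually.of_forall hpD)
  · -- T of the limit equals z0, coordinatewise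
    funext n
    obtain ⟨N1, h1⟩ := hKd (((1:ℝ)/2)^n) (by positivity)
    obtain ⟨N2, h2⟩ := hxd (((1:ℝ)/2)^n) (by positivity)
    obtain ⟨N3, h3⟩ := (Metric.tendsto_atTop.1 hz0) (((1:ℝ)/2)^n) (by positivity)
    set i := max N1 (max N2 N3)
    have hprof : profile ((p i).val.1) n = profile Kl n :=
      profile_eq_of_dist_lt (h1 i (le_max_left _ _))
    have hxn : (p i).val.2 n = xl n :=
      agree_of_dist_lt (h2 i (le_trans (le_max_left _ _) (le_max_right _ _))) n le_rfl
    have hzn : z i n = z0 n :=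
      agree_of_dist_lt (h3 i (le_trans (le_max_right _ _) (le_max_right _ _))) n le_rfl
    have hTn : T (p i) n = (p i).val.2 n + tmap ((p i).val.1) n := rfl
    have : z i n = T (p i) n := by rw [hpz i]
    rw [this, hTn] at hzn
    have htm : tmap ((p i).val.1) n = tmap Kl n := by
      simp only [tmap, hprof]
    show T (⟨(Kl, xl), hmem⟩ : Hsub) n = z0 n
    rw [← hzn, hxn, htm]
    rfl

lemma exists_profile_ne {K K' : 𝒦} (h : K ≠ K') : ∃ n, profile K n ≠ profile K' n := by
  by_contra hc
  push_neg at hc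
  exact h (eq_of_profiles_eq hc)

end TCA

theorem translating_compacts_apart :
    ∃ t : NonemptyCompacts (ℕ → ℤ) → (ℕ → ℤ), Continuous t ∧
      (IsClosedEmbedding
        (fun p : {q : NonemptyCompacts (ℕ → ℤ) × (ℕ → ℤ) // q.2 ∈ q.1} =>
          p.val.2 + t p.val.1)) ∧
      (∀ K K' : NonemptyCompacts (ℕ → ℤ), K ≠ K' →
        Disjoint ((fun x => x + t K) '' K) ((fun x => x + t K') '' K')) ∧
      (⋃ K : NonemptyCompacts (ℕ → ℤ), (fun x => x + t K) '' K) =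
        Set.range (fun p : {q : NonemptyCompacts (ℕ → ℤ) × (ℕ → ℤ) // q.2 ∈ q.1} =>
          p.val.2 + t p.val.1) ∧
      ∀ K : NonemptyCompacts (ℕ → ℤ),
        (((fun x => x + t K) '' K) + {ε : ℕ → ℤ | ∀ n, ε n = -1 ∨ ε n = 0 ∨ ε n = 1}) ∩
            Set.range (fun p : {q : NonemptyCompacts (ℕ → ℤ) × (ℕ → ℤ) // q.2 ∈ q.1} =>
              p.val.2 + t p.val.1) =
          (fun x => x + t K) '' K := by
  refine ⟨TCA.tmap, TCA.continuous_tmap, ?_, ?_, ?_, ?_⟩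
  · exact IsClosedEmbedding.of_continuous_injective_isClosedMap
      TCA.T_cont TCA.T_inj TCA.T_closedMap
  · intro K K' hne
    rw [Set.disjoint_left]
    rintro z ⟨x, hx, rfl⟩ ⟨x', hx', heq⟩
    obtain ⟨n, hn⟩ := TCA.exists_profile_ne hne
    refine TCA.sep hn hx hx' (ε := 0) (by norm_num) ?_
    have h0 := congrFun heq n
    simp only [Pi.add_apply] at h0
    omega
  · ext z
    simp only [Set.mem_iUnion, Set.mem_image, Set.mem_range]
    constructor
    · rintro ⟨K, x, hx, rfl⟩
      exact ⟨⟨(K, x), hx⟩, rfl⟩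
    · rintro ⟨⟨⟨K, x⟩, hx⟩, rfl⟩
      exact ⟨K, x, hx, rfl⟩
  · intro K
    apply Set.Subset.antisymm
    · rintro z ⟨hz1, hz2⟩
      obtain ⟨⟨⟨K', x'⟩, hx'⟩, rfl⟩ := hz2
      obtain ⟨w, hw, e, he, hwe⟩ := Set.mem_add.1 hz1
      obtain ⟨x, hx, rfl⟩ := hw
      by_cases hKK : K = K'
      · subst hKK
        exact ⟨x', hx', rfl⟩
      · exfalso
        obtain ⟨n, hn⟩ := TCA.exists_profile_ne hKK
        have h0 := congrFun hwe n
        simp only [Pi.add_apply] at h0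
        have hεn : (e n).natAbs ≤ 1 := by rcases he n with h|h|h <;> simp [h]
        exact TCA.sep hn hx hx' hεn h0
    · rintro z ⟨x, hx, rfl⟩
      constructor
      · refine Set.mem_add.2 ⟨x + TCA.tmap K, ⟨x, hx, rfl⟩, 0, ?_, add_zero _⟩
        intro n
        exact Or.inr (Or.inl rfl)
      · exact ⟨⟨(K, x), hx⟩, rfl⟩
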